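/- The Borden bound: A_M(n,d,2) ≤ d · A_H(n, 2d−1, 2), i.e., any binary code with pairwise Max-distance at least d has size at most d times the maximum size of a binary code of length n with minimum Hamming distance 2d−1. -/

import Mathlib

/-- `L(x,y) = |{i : x_i < y_i}|` for binary words. -/
def Lcnt {n : ℕ} (x y : Fin n → Fin 2) : ℕ :=
  (Finset.univ.filter fun i => x i < y i).card

def wtB {n : ℕ} (x : Fin n → Fin 2) : ℕ :=
  (Finset.univ.filter fun i => x i = 1).card

lemma wt_add_Lcnt {n : ℕ} (x y : Fin n → Fin 2) :
    wtB x + Lcnt x y = wtB y + Lcnt y x := by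
  have key : ∀ a b : Fin 2, (a = 1 ∨ a < b) ↔ (a = 1 ∨ b = 1) := by decide
  have h : ∀ u v : Fin n → Fin 2,
      wtB u + Lcnt u v = (Finset.univ.filter fun i => u i = 1 ∨ v i = 1).card := by
    intro u v
    rw [wtB, Lcnt, ← Finset.card_union_of_disjoint]
    · rw [← Finset.filter_or]
      congr 1
      apply Finset.filter_congr
      intro i _
      simpa using key (u i) (v i)
    · rw [Finset.disjoint_filter]
      intro i _ h1 h2
      rw [h1] at h2
      have : ∀ b : Fin 2, ¬ (1:Fin 2) < b := by decide
      exact this _ h2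
  rw [h x y, h y x]
  congr 1
  apply Finset.filter_congr
  intro i _
  simp [or_comm]

lemma arithKey (d a b wx wy : ℕ) (hd : 1 ≤ d) (hab : b ≤ a) (hda : d ≤ a)
    (hw : wx + a = wy + b) (hmod : wx % (2*d) / 2 = wy % (2*d) / 2) :
    2*d - 1 ≤ a + b := by
  have hx := Nat.div_add_mod wx (2*d)
  have hy := Nat.div_add_mod wy (2*d)
  have h2d : 0 < 2*d := by omega
  have hmx := Nat.mod_lt wx h2d
  have hmy := Nat.mod_lt wy h2d
  rcases lt_trichotomy (wx / (2*d)) (wy / (2*d)) with h|h|h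
  · have h2 : 2*d*(wx/(2*d)) + 2*d ≤ 2*d*(wy/(2*d)) := by
      have h3 := Nat.mul_le_mul_left (2*d) (Nat.succ_le_of_lt h)
      rwa [Nat.mul_succ] at h3
    set U := 2*d*(wx/(2*d)); set V := 2*d*(wy/(2*d))
    set Mx := wx % (2*d); set My := wy % (2*d)
    omega
  · rw [h] at hx
    set V := 2*d*(wy/(2*d))
    set Mx := wx % (2*d); set My := wy % (2*d)
    omega
  · have h2 : 2*d*(wy/(2*d)) + 2*d ≤ 2*d*(wx/(2*d)) := by
      have h3 := Nat.mul_le_mul_left (2*d) (Nat.succ_le_of_lt h)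
      rwa [Nat.mul_succ] at h3
    set U := 2*d*(wx/(2*d)); set V := 2*d*(wy/(2*d))
    set Mx := wx % (2*d); set My := wy % (2*d)
    omega

lemma hamKey {n : ℕ} (d : ℕ) (hd : 1 ≤ d) (x y : Fin n → Fin 2)
    (hmax : d ≤ max (Lcnt x y) (Lcnt y x))
    (hmod : wtB x % (2*d) / 2 = wtB y % (2*d) / 2) :
    2*d - 1 ≤ Lcnt x y + Lcnt y x := by
  have hw := wt_add_Lcnt x y
  rcases le_total (Lcnt y x) (Lcnt x y) with hab|hab
  · exact arithKey d (Lcnt x y) (Lcnt y x) (wtB x) (wtB y) hd hab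
      (by omega) hw hmod
  · have := arithKey d (Lcnt y x) (Lcnt x y) (wtB y) (wtB x) hd hab
      (by omega) hw.symm hmod.symm
    omega

/-- Borden bound: `A_M(n,d,2) ≤ d · A_H(n, 2d−1, 2)`: any binary
code with pairwise Max-distance at least `d ≥ 1` has size at most `d` times the
maximum size of a binary code of length `n` with minimum Hamming distance `2d−1`. -/
theorem stmt15 (n d : ℕ) (hd : 1 ≤ d) :
    sSup {m : ℕ | ∃ C : Finset (Fin n → Fin 2),
        (∀ x ∈ C, ∀ y ∈ C, x ≠ y → d ≤ max (Lcnt x y) (Lcnt y x)) ∧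
        m = C.card} ≤
      d * sSup {m : ℕ | ∃ C : Finset (Fin n → Fin 2),
        (∀ x ∈ C, ∀ y ∈ C, x ≠ y → 2 * d - 1 ≤ Lcnt x y + Lcnt y x) ∧
        m = C.card} := by
  set S2 := {m : ℕ | ∃ C : Finset (Fin n → Fin 2),
        (∀ x ∈ C, ∀ y ∈ C, x ≠ y → 2 * d - 1 ≤ Lcnt x y + Lcnt y x) ∧
        m = C.card} with hS2
  have hbdd : BddAbove S2 := by
    refine ⟨Fintype.card (Fin n → Fin 2), ?_⟩
    rintro m ⟨C, -, rfl⟩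
    exact Finset.card_le_univ C
  have hne : {m : ℕ | ∃ C : Finset (Fin n → Fin 2),
        (∀ x ∈ C, ∀ y ∈ C, x ≠ y → d ≤ max (Lcnt x y) (Lcnt y x)) ∧
        m = C.card}.Nonempty :=
    ⟨0, ∅, by simp, by simp⟩
  apply csSup_le hne
  rintro m ⟨C, hC, rfl⟩
  -- partition C by the class function
  have hfib := Finset.card_eq_sum_card_fiberwise
    (f := fun x => wtB x % (2*d) / 2) (s := C) (t := Finset.range d)
    (by
      intro x _
      rw [Finset.mem_coe, Finset.mem_range]
      show wtB x % (2*d) / 2 < d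
      have : wtB x % (2*d) < 2*d := Nat.mod_lt _ (by omega)
      omega)
  rw [hfib]
  have hle : ∀ i ∈ Finset.range d,
      (C.filter fun x => wtB x % (2*d) / 2 = i).card ≤ sSup S2 := by
    intro i _
    apply le_csSup hbdd
    refine ⟨C.filter fun x => wtB x % (2*d) / 2 = i, ?_, rfl⟩
    intro x hx y hy hxy
    rw [Finset.mem_filter] at hx hy
    have := hamKey d hd x y (hC x hx.1 y hy.1 hxy) (hx.2.trans hy.2.symm)
    omega
  calc (Finset.range d).sum (fun i => (C.filter fun x => wtB x % (2*d) / 2 = i).card)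
      ≤ (Finset.range d).sum (fun _ => sSup S2) := Finset.sum_le_sum hle
    _ = d * sSup S2 := by rw [Finset.sum_const, Finset.card_range, smul_eq_mul]
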